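/- For positive parameters m, M_H, M_T, r, l, the mass matrix M(θ) of the three-link biped is positive definite for every θ ∈ ℝ³. -/

import Mathlib

open Matrix Real

noncomputable def bipedM (m MH MT r l : ℝ) (θ : Fin 3 → ℝ) :
    Matrix (Fin 3) (Fin 3) ℝ :=
  !![(5/4*m + MH + MT)*r^2, -(1/2)*m*r^2*cos (θ 0 - θ 1), MT*r*l*cos (θ 0 - θ 2);
     -(1/2)*m*r^2*cos (θ 0 - θ 1), (1/4)*m*r^2, 0;
     MT*r*l*cos (θ 0 - θ 2), 0, MT*l^2]

theorem stmt6 (m MH MT r l : ℝ) (hm : 0 < m) (hMH : 0 < MH) (hMT : 0 < MT)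
    (hr : 0 < r) (hl : 0 < l) (θ : Fin 3 → ℝ) :
    (bipedM m MH MT r l θ).PosDef := by
  set c1 := cos (θ 0 - θ 1) with hc1def
  set c2 := cos (θ 0 - θ 2) with hc2def
  have h1 : c1 ^ 2 ≤ 1 := cos_sq_le_one _
  have h2 : c2 ^ 2 ≤ 1 := cos_sq_le_one _
  rw [posDef_iff_dotProduct_mulVec]
  constructor
  · ext i j
    fin_cases i <;> fin_cases j <;>
      simp [bipedM, Matrix.conjTranspose_apply]
  · intro x hx
    have key : star x ⬝ᵥ (bipedM m MH MT r l θ).mulVec x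
        = (m/4)*r^2*(x 1 - 2*c1*x 0)^2 + MT*(l*x 2 + r*c2*x 0)^2
          + ((5/4 - c1^2)*m + MH + (1-c2^2)*MT)*r^2*(x 0)^2 := by
      simp [bipedM, Matrix.mulVec, dotProduct, Fin.sum_univ_three]
      ring
    rw [key]
    have hne : ∃ i, x i ≠ 0 := Function.ne_iff.mp hx
    have hcoef : 0 ≤ (5/4 - c1^2)*m + MH + (1-c2^2)*MT := by nlinarith
    have ht3 : 0 ≤ ((5/4 - c1^2)*m + MH + (1-c2^2)*MT)*r^2*(x 0)^2 :=
      mul_nonneg (mul_nonneg hcoef (sq_nonneg r)) (sq_nonneg (x 0))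
    have ht1 : 0 ≤ (m/4)*r^2*(x 1 - 2*c1*x 0)^2 := by positivity
    have ht2 : 0 ≤ MT*(l*x 2 + r*c2*x 0)^2 := by positivity
    by_cases h0 : x 0 = 0
    · obtain ⟨i, hi⟩ := hne
      fin_cases i <;> simp only [Fin.isValue] at hi
      · exact absurd h0 hi
      · have hne1 : x 1 - 2*c1*x 0 ≠ 0 := by rw [h0]; simpa using hi
        have : 0 < (m/4)*r^2*(x 1 - 2*c1*x 0)^2 := by positivity
        linarith
      · have hne2 : l*x 2 + r*c2*x 0 ≠ 0 := by
          rw [h0]; simpa [hl.ne'] using hi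
        have : 0 < MT*(l*x 2 + r*c2*x 0)^2 := by positivity
        linarith
    · have hcp : (0:ℝ) < (5/4 - c1^2)*m + MH + (1-c2^2)*MT := by nlinarith
      have hx0 : 0 < (x 0)^2 := by positivity
      have : 0 < ((5/4 - c1^2)*m + MH + (1-c2^2)*MT)*r^2*(x 0)^2 :=
        mul_pos (mul_pos hcp (pow_pos hr 2)) hx0
      linarith
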